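/- The pair (a⁻, a⁺) acts irreducibly on C(ℤ_p, ℚ_p): every closed ℚ_p-linear subspace W of C(ℤ_p, ℚ_p) that is invariant under both a⁺ and a⁻ is either the zero subspace or all of C(ℤ_p, ℚ_p). -/

import Mathlib

/-- The raising operator `a⁺`: `(a⁺ f)(x) = x · f(x - 1)`. -/
noncomputable def aPlus (p : ℕ) [Fact p.Prime] (f : ℤ_[p] → ℚ_[p]) (x : ℤ_[p]) : ℚ_[p] :=
  (x : ℚ_[p]) * f (x - 1)

/-- The lowering operator `a⁻`: `(a⁻ f)(x) = f(x + 1) - f(x)`. -/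
noncomputable def aMinus (p : ℕ) [Fact p.Prime] (f : ℤ_[p] → ℚ_[p]) (x : ℤ_[p]) : ℚ_[p] :=
  f (x + 1) - f x

instance instIsBoundedSMulPadicIntPadic {p : ℕ} [Fact p.Prime] : IsBoundedSMul ℤ_[p] ℚ_[p] :=
  IsBoundedSMul.of_norm_smul_le fun r x => by
    rw [Algebra.smul_def, norm_mul]
    rfl

/-- The Mahler functions viewed as `ℚ_[p]`-valued. -/
@[coe] noncomputable def toQ {p : ℕ} [Fact p.Prime] (f : C(ℤ_[p], ℤ_[p])) : C(ℤ_[p], ℚ_[p]) :=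
  ⟨fun x => ((f x : ℤ_[p]) : ℚ_[p]), by fun_prop⟩

noncomputable instance {p : ℕ} [Fact p.Prime] : Coe C(ℤ_[p], ℤ_[p]) C(ℤ_[p], ℚ_[p]) := ⟨toQ⟩

@[simp] lemma toQ_apply {p : ℕ} [Fact p.Prime] (f : C(ℤ_[p], ℤ_[p])) (x : ℤ_[p]) :
    toQ f x = ((f x : ℤ_[p]) : ℚ_[p]) := rfl

open scoped fwdDiff
open Finset Filter

variable {p : ℕ} [Fact p.Prime]

lemma ccr_step (u : ℤ_[p] → ℚ_[p]) :
    fwdDiff (1:ℤ_[p]) (aPlus p u) = aPlus p (fwdDiff (1:ℤ_[p]) u) + u := by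
  funext x
  simp only [fwdDiff, aPlus, Pi.add_apply, add_sub_cancel_right]
  push_cast
  ring

lemma fwdDiff_iter_aPlus (u : ℤ_[p] → ℚ_[p]) (n : ℕ) :
    (fwdDiff (1:ℤ_[p]))^[n+1] (aPlus p u) =
      aPlus p ((fwdDiff (1:ℤ_[p]))^[n+1] u) + (((n:ℚ_[p]) + 1)) • (fwdDiff (1:ℤ_[p]))^[n] u := by
  induction n with
  | zero => simpa using ccr_step u
  | succ n ih =>
      have h2 : (fwdDiff (1:ℤ_[p]))^[n+1+1] (aPlus p u)
          = fwdDiff (1:ℤ_[p]) ((fwdDiff (1:ℤ_[p]))^[n+1] (aPlus p u)) :=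
        Function.iterate_succ_apply' _ _ _
      rw [h2, ih, fwdDiff_add, fwdDiff_const_smul, ccr_step,
        ← Function.iterate_succ_apply' (fwdDiff (1:ℤ_[p])) (n+1) u,
        ← Function.iterate_succ_apply' (fwdDiff (1:ℤ_[p])) n u]
      funext x
      simp only [Pi.add_apply, Pi.smul_apply, smul_eq_mul]
      push_cast
      ring

lemma aPlus_apply_zero (u : ℤ_[p] → ℚ_[p]) : aPlus p u 0 = 0 := by
  simp [aPlus]

section ops

variable (Aplus Aminus : C(ℤ_[p], ℚ_[p]) →L[ℚ_[p]] C(ℤ_[p], ℚ_[p]))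
    (hAp : ∀ (f : C(ℤ_[p], ℚ_[p])) (x : ℤ_[p]), Aplus f x = aPlus p (⇑f) x)
    (hAm : ∀ (f : C(ℤ_[p], ℚ_[p])) (x : ℤ_[p]), Aminus f x = aMinus p (⇑f) x)

/-- Mahler coefficients. -/
noncomputable def mc (g : C(ℤ_[p], ℚ_[p])) (n : ℕ) : ℚ_[p] := (fwdDiff (1:ℤ_[p]))^[n] (⇑g) 0

lemma mc_eq (g : C(ℤ_[p], ℚ_[p])) : PadicInt.mahlerEquiv ℚ_[p] g = (mc g : ℕ → ℚ_[p]) := rfl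

include hAm in
lemma coe_aminus (g : C(ℤ_[p], ℚ_[p])) : ⇑(Aminus g) = fwdDiff (1:ℤ_[p]) (⇑g) := by
  funext x
  simp [hAm g x, aMinus, fwdDiff]

include hAm in
lemma mc_aminus (g : C(ℤ_[p], ℚ_[p])) (n : ℕ) : mc (Aminus g) n = mc g (n+1) := by
  simp only [mc, coe_aminus Aminus hAm, ← Function.iterate_succ_apply]

include hAm in
lemma mc_aminus_pow (k : ℕ) (g : C(ℤ_[p], ℚ_[p])) (n : ℕ) :
    mc ((Aminus ^ k) g) n = mc g (n + k) := by
  induction k generalizing g n with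
  | zero => simp
  | succ k ih =>
      rw [pow_succ, ContinuousLinearMap.mul_apply, ih, mc_aminus Aminus hAm]
      ring_nf

include hAp in
lemma mc_aplus_zero (g : C(ℤ_[p], ℚ_[p])) : mc (Aplus g) 0 = 0 := by
  simp only [mc, Function.iterate_zero, id_eq]
  rw [hAp g 0, aPlus_apply_zero]

include hAp in
lemma coe_aplus (g : C(ℤ_[p], ℚ_[p])) : ⇑(Aplus g) = aPlus p (⇑g) := funext (hAp g)

include hAp in
lemma mc_aplus_succ (g : C(ℤ_[p], ℚ_[p])) (n : ℕ) :
    mc (Aplus g) (n+1) = ((n+1 : ℕ) : ℚ_[p]) * mc g n := by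
  simp only [mc, coe_aplus Aplus hAp]
  rw [fwdDiff_iter_aPlus]
  simp only [Pi.add_apply, Pi.smul_apply, smul_eq_mul, aPlus_apply_zero]
  push_cast
  ring

include hAp in
lemma mc_aplus_pow (k : ℕ) (g : C(ℤ_[p], ℚ_[p])) (n : ℕ) :
    mc ((Aplus ^ k) g) n = (n.descFactorial k : ℚ_[p]) * mc g (n - k) := by
  induction k generalizing g n with
  | zero => simp
  | succ k ih =>
      rw [pow_succ, ContinuousLinearMap.mul_apply, ih]
      rcases Nat.eq_zero_or_eq_succ_pred (n - k) with h | h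
      · rw [h, mc_aplus_zero Aplus hAp]
        have hnk : n.descFactorial (k+1) = (n - k) * n.descFactorial k := Nat.descFactorial_succ n k
        rw [hnk, h]
        simp
      · obtain ⟨m, hm⟩ : ∃ m, n - k = m + 1 := ⟨(n-k)-1, by omega⟩
        rw [hm, mc_aplus_succ Aplus hAp]
        have h1 : n - (k+1) = m := by omega
        have h2 : n.descFactorial (k+1) = (m+1) * n.descFactorial k := by
          rw [Nat.descFactorial_succ, ← hm]
        rw [h1, h2]
        push_cast
        ring

include hAp hAm in
lemma mc_NN (k : ℕ) (g : C(ℤ_[p], ℚ_[p])) (n : ℕ) :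
    mc ((Aplus ^ k) ((Aminus ^ k) g)) n = (n.descFactorial k : ℚ_[p]) * mc g n := by
  rw [mc_aplus_pow Aplus hAp, mc_aminus_pow Aminus hAm]
  rcases le_or_gt k n with h | h
  · rw [Nat.sub_add_cancel h]
  · rw [Nat.descFactorial_eq_zero_iff_lt.mpr h]
    simp

end ops

/-- Iterated forward difference of the zero function. -/
lemma fwdDiff_iter_zero_fun (n : ℕ) :
    (fwdDiff (1:ℤ_[p]))^[n] (fun _ : ℤ_[p] => (0:ℚ_[p])) = fun _ => 0 := by
  induction n with
  | zero => rfl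
  | succ n ih => rw [Function.iterate_succ_apply', ih, fwdDiff_const]

lemma mc_mahler_zero_zero : mc (p := p) (mahler (p := p) 0) 0 = 1 := by
  simp [mc, mahler_apply, Ring.choose_zero_right]

lemma coe_mahler_zero : ⇑(mahler (p := p) 0 : C(ℤ_[p], ℚ_[p])) = fun _ => (1:ℚ_[p]) := by
  funext x
  simp [mahler_apply, Ring.choose_zero_right]

lemma mc_mahler_zero_succ (n : ℕ) : mc (p := p) (mahler (p := p) 0) (n+1) = 0 := by
  simp only [mc, coe_mahler_zero, Function.iterate_succ_apply, fwdDiff_const]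
  rw [fwdDiff_iter_zero_fun]

lemma mc_smul (c : ℚ_[p]) (g : C(ℤ_[p], ℚ_[p])) (n : ℕ) : mc (c • g) n = c * mc g n := by
  simp [mc, ContinuousMap.coe_smul, fwdDiff_iter_const_smul]

lemma mc_add (g₁ g₂ : C(ℤ_[p], ℚ_[p])) (n : ℕ) : mc (g₁ + g₂) n = mc g₁ n + mc g₂ n := by
  simp [mc, ContinuousMap.coe_add, fwdDiff_iter_add]

lemma mc_sum {ι : Type*} (s : Finset ι) (g : ι → C(ℤ_[p], ℚ_[p])) (n : ℕ) :
    mc (∑ i ∈ s, g i) n = ∑ i ∈ s, mc (g i) n := by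
  classical
  induction s using Finset.induction_on with
  | empty =>
      simp only [Finset.sum_empty, mc, ContinuousMap.coe_zero]
      exact congrFun (fwdDiff_iter_zero_fun n) 0
  | insert _ _ h ih => rw [Finset.sum_insert h, Finset.sum_insert h, mc_add, ih]

lemma mc_sub (g₁ g₂ : C(ℤ_[p], ℚ_[p])) (n : ℕ) : mc (g₁ - g₂) n = mc g₁ n - mc g₂ n := by
  have := mc_add (g₁ - g₂) g₂ n
  rw [sub_add_cancel] at this
  rw [this]
  ring

/-- The alternating binomial sum. -/
def Qi (M n : ℕ) : ℤ := ∑ k ∈ Finset.range (M+1), (-1)^k * (n.choose k : ℤ)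

lemma Qi_zero (M : ℕ) : Qi M 0 = 1 := by
  rw [Qi, Finset.sum_eq_single 0]
  · simp
  · intro k hk hk0
    rw [Nat.choose_eq_zero_of_lt (Nat.pos_of_ne_zero hk0)]
    ring
  · simp

lemma Qi_eq_zero {M n : ℕ} (h1 : 1 ≤ n) (h2 : n ≤ M) : Qi M n = 0 := by
  rw [Qi, ← Finset.sum_subset (Finset.range_subset_range.mpr (by omega : n + 1 ≤ M + 1))]
  · rw [Int.alternating_sum_range_choose_of_ne (by omega)]
  · intro k hk hnk
    simp only [Finset.mem_range] at hk hnk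
    rw [Nat.choose_eq_zero_of_lt (by omega)]
    ring

lemma aplus_mahler (Aplus : C(ℤ_[p], ℚ_[p]) →L[ℚ_[p]] C(ℤ_[p], ℚ_[p]))
    (hAp : ∀ (f : C(ℤ_[p], ℚ_[p])) (x : ℤ_[p]), Aplus f x = aPlus p (⇑f) x) (n : ℕ) :
    Aplus (mahler (p := p) n) = ((n : ℚ_[p]) + 1) • (mahler (p := p) (n+1) : C(ℤ_[p], ℚ_[p])) := by
  apply ContinuousMap.coe_injective
  apply PadicInt.denseRange_natCast.equalizer (map_continuous _) (map_continuous _)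
  funext m
  simp only [Function.comp_apply]
  rw [hAp]
  match m with
  | 0 =>
      have h0 : ((0:ℕ) : ℤ_[p]) = 0 := by push_cast; ring
      rw [h0]
      rw [aPlus_apply_zero]
      have : (mahler (p := p) (n+1) : C(ℤ_[p], ℚ_[p])) 0 = ((Nat.choose 0 (n+1) : ℕ) : ℚ_[p]) := by
        rw [← h0, toQ_apply, mahler_natCast_eq, PadicInt.coe_natCast]
      simp only [ContinuousMap.smul_apply, smul_eq_mul, this]
      simp
  | (m+1) =>
      have h1 : ((m+1:ℕ) : ℤ_[p]) - 1 = ((m:ℕ) : ℤ_[p]) := by push_cast; ring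
      simp only [aPlus, ContinuousMap.smul_apply, smul_eq_mul, h1]
      rw [toQ_apply, toQ_apply, mahler_natCast_eq, mahler_natCast_eq, PadicInt.coe_natCast,
        PadicInt.coe_natCast]
      have h := Nat.add_one_mul_choose_eq m n
      have h2 : ((m+1) * m.choose n : ℕ) = ((m+1).choose (n+1) * (n+1) : ℕ) := h
      have h3 : (((m+1) * m.choose n : ℕ) : ℚ_[p]) = (((m+1).choose (n+1) * (n+1) : ℕ) : ℚ_[p]) := by
        exact_mod_cast h2
      push_cast at h3 ⊢
      linear_combination h3

lemma mahlerTerm_eq (a : ℚ_[p]) (n : ℕ) :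
    (PadicInt.mahlerTerm a n : C(ℤ_[p], ℚ_[p])) = a • (mahler (p := p) n : C(ℤ_[p], ℚ_[p])) := by
  ext x
  simp only [PadicInt.mahlerTerm_apply, ContinuousMap.smul_apply, smul_eq_mul, toQ_apply]
  rw [Algebra.smul_def, PadicInt.algebraMap_apply]
  ring

lemma norm_le_of_mc (x : C(ℤ_[p], ℚ_[p])) {ε : ℝ} (hε : 0 ≤ ε) (h : ∀ n, ‖mc x n‖ ≤ ε) :
    ‖x‖ ≤ ε := by
  rw [← (PadicInt.mahlerEquiv ℚ_[p]).norm_map x, ← ZeroAtInftyContinuousMap.norm_toBCF_eq_norm]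
  exact (BoundedContinuousFunction.norm_le hε).mpr h


/-- The pair `(a⁻, a⁺)` acts irreducibly on `C(ℤ_[p], ℚ_[p])`: every closed
`ℚ_[p]`-linear subspace invariant under both `a⁺` and `a⁻` is `⊥` or `⊤`. -/
theorem ccr_irreducible (p : ℕ) [Fact p.Prime]
    (Aplus Aminus : C(ℤ_[p], ℚ_[p]) →L[ℚ_[p]] C(ℤ_[p], ℚ_[p]))
    (hAp : ∀ (f : C(ℤ_[p], ℚ_[p])) (x : ℤ_[p]), Aplus f x = aPlus p (⇑f) x)
    (hAm : ∀ (f : C(ℤ_[p], ℚ_[p])) (x : ℤ_[p]), Aminus f x = aMinus p (⇑f) x)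
    (W : Submodule ℚ_[p] C(ℤ_[p], ℚ_[p])) (hW : IsClosed (W : Set C(ℤ_[p], ℚ_[p])))
    (hWp : ∀ f ∈ W, Aplus f ∈ W) (hWm : ∀ f ∈ W, Aminus f ∈ W) :
    W = ⊥ ∨ W = ⊤ := by
  by_cases hbot : W = ⊥
  · exact Or.inl hbot
  right
  obtain ⟨f, hfW, hf0⟩ := (Submodule.ne_bot_iff W).mp hbot
  -- powers of the operators preserve W
  have hmemP : ∀ (k : ℕ) (g : C(ℤ_[p], ℚ_[p])), g ∈ W → (Aplus ^ k) g ∈ W := by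
    intro k
    induction k with
    | zero => intro g hg; simpa using hg
    | succ k ih =>
        intro g hg
        rw [pow_succ, ContinuousLinearMap.mul_apply]
        exact ih _ (hWp _ hg)
  have hmemM : ∀ (k : ℕ) (g : C(ℤ_[p], ℚ_[p])), g ∈ W → (Aminus ^ k) g ∈ W := by
    intro k
    induction k with
    | zero => intro g hg; simpa using hg
    | succ k ih =>
        intro g hg
        rw [pow_succ, ContinuousLinearMap.mul_apply]
        exact ih _ (hWm _ hg)
  -- some Mahler coefficient of f is nonzero
  have hex : ∃ n, mc f n ≠ 0 := by
    by_contra hc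
    push_neg at hc
    apply hf0
    have hT : PadicInt.mahlerEquiv ℚ_[p] f = 0 := by
      ext n
      exact hc n
    exact (PadicInt.mahlerEquiv ℚ_[p]).injective (hT.trans (map_zero _).symm)
  obtain ⟨n₀, hn₀⟩ := hex
  -- normalized element h0 ∈ W with mc h0 0 = 1
  set h0 : C(ℤ_[p], ℚ_[p]) := (mc f n₀)⁻¹ • ((Aminus ^ n₀) f) with hh0
  have hh0W : h0 ∈ W := W.smul_mem _ (hmemM _ _ hfW)
  have hb : ∀ k, mc h0 k = (mc f n₀)⁻¹ * mc f (k + n₀) := by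
    intro k
    rw [hh0, mc_smul, mc_aminus_pow Aminus hAm]
  have hb0 : mc h0 0 = 1 := by
    rw [hb 0, zero_add, inv_mul_cancel₀ hn₀]
  have hbt : Filter.Tendsto (fun n => mc h0 n) atTop (nhds 0) :=
    PadicInt.fwdDiff_tendsto_zero h0
  -- mahler (p := p) 0 ∈ W
  have hm0 : (mahler (p := p) 0 : C(ℤ_[p], ℚ_[p])) ∈ W := by
    have hcl : (mahler (p := p) 0 : C(ℤ_[p], ℚ_[p])) ∈ closure (W : Set C(ℤ_[p], ℚ_[p])) := by
      rw [Metric.mem_closure_iff]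
      intro ε hε
      obtain ⟨M, hM⟩ : ∃ M, ∀ n ≥ M, ‖mc h0 n‖ < ε/2 :=
        Filter.eventually_atTop.mp
          (NormedAddCommGroup.tendsto_nhds_zero.mp hbt (ε/2) (by positivity))
      set gM : C(ℤ_[p], ℚ_[p]) := ∑ k ∈ Finset.range (M+1),
        ((-1:ℚ_[p])^k * ((k.factorial : ℚ_[p]))⁻¹) • ((Aplus ^ k) ((Aminus ^ k) h0)) with hgM
      have hgMW : gM ∈ W := by
        apply Submodule.sum_mem
        intro k _
        exact W.smul_mem _ (hmemP _ _ (hmemM _ _ hh0W))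
      refine ⟨gM, hgMW, ?_⟩
      -- coefficient of gM
      have hmcgM : ∀ n, mc gM n = ((Qi M n : ℤ) : ℚ_[p]) * mc h0 n := by
        intro n
        rw [hgM, mc_sum]
        have hterm : ∀ k, mc ((((-1:ℚ_[p])^k * ((k.factorial : ℚ_[p]))⁻¹)) •
            ((Aplus ^ k) ((Aminus ^ k) h0))) n
            = ((-1:ℚ_[p])^k * ((n.choose k : ℕ) : ℚ_[p])) * mc h0 n := by
          intro k
          rw [mc_smul, mc_NN Aplus Aminus hAp hAm]
          have hdf : ((n.descFactorial k : ℕ) : ℚ_[p])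
              = ((k.factorial : ℕ) : ℚ_[p]) * ((n.choose k : ℕ) : ℚ_[p]) := by
            exact_mod_cast congrArg (fun m : ℕ => (m : ℚ_[p]))
              (Nat.descFactorial_eq_factorial_mul_choose n k)
          have hk : ((k.factorial : ℕ) : ℚ_[p]) ≠ 0 :=
            Nat.cast_ne_zero.mpr k.factorial_ne_zero
          rw [hdf]
          field_simp
        rw [Finset.sum_congr rfl (fun k _ => hterm k), ← Finset.sum_mul, Qi]
        push_cast
        ring
      have hbound : dist (mahler (p := p) 0 : C(ℤ_[p], ℚ_[p])) gM ≤ ε/2 := by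
        rw [dist_eq_norm]
        apply norm_le_of_mc _ (by positivity)
        intro n
        rw [mc_sub, hmcgM]
        match n with
        | 0 =>
            rw [mc_mahler_zero_zero, hb0, Qi_zero]
            simp only [Int.cast_one, one_mul, sub_self, norm_zero]
            linarith
        | (j+1) =>
            rw [mc_mahler_zero_succ]
            by_cases hjM : j + 1 ≤ M
            · rw [Qi_eq_zero (by omega) hjM]
              simp only [Int.cast_zero, zero_mul, sub_zero, norm_zero]
              linarith
            · have h1 : ‖(0:ℚ_[p]) - ((Qi M (j+1) : ℤ) : ℚ_[p]) * mc h0 (j+1)‖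
                  = ‖((Qi M (j+1) : ℤ) : ℚ_[p])‖ * ‖mc h0 (j+1)‖ := by
                rw [zero_sub, norm_neg, norm_mul]
              rw [h1]
              calc ‖((Qi M (j+1) : ℤ) : ℚ_[p])‖ * ‖mc h0 (j+1)‖
                  ≤ 1 * ‖mc h0 (j+1)‖ :=
                    mul_le_mul_of_nonneg_right (Padic.norm_int_le_one _) (norm_nonneg _)
                _ = ‖mc h0 (j+1)‖ := one_mul _
                _ ≤ ε/2 := (hM (j+1) (by omega)).le
      exact lt_of_le_of_lt hbound (by linarith)
    rwa [hW.closure_eq] at hcl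
  -- all mahler basis functions are in W
  have hmah : ∀ n, (mahler (p := p) n : C(ℤ_[p], ℚ_[p])) ∈ W := by
    intro n
    induction n with
    | zero => exact hm0
    | succ n ih =>
        have hrec := aplus_mahler Aplus hAp n
        have hn1 : ((n : ℚ_[p]) + 1) ≠ 0 := Nat.cast_add_one_ne_zero n
        have : (mahler (p := p) (n+1) : C(ℤ_[p], ℚ_[p])) = ((n : ℚ_[p]) + 1)⁻¹ • (Aplus (mahler (p := p) n)) := by
          rw [hrec, smul_smul, inv_mul_cancel₀ hn1, one_smul]
        rw [this]
        exact W.smul_mem _ (hWp _ ih)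
  -- conclude W = ⊤
  rw [Submodule.eq_top_iff']
  intro g
  have hsum := PadicInt.hasSum_mahler g
  refine hW.mem_of_tendsto hsum (Filter.Eventually.of_forall fun s => ?_)
  exact Submodule.sum_mem W fun n _ => by
    rw [mahlerTerm_eq]
    exact W.smul_mem _ (hmah n)
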